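/- Let $X = (X_1, X_2)$ with $\|X_1\|_2 = \|X_2\|_2 = 1$, $X_1^T X_2 = -\hat\rho$, $0 < \hat\rho < 1$, $\hat\varphi^2 := 1-\hat\rho$. Let $\beta_1^0 \ge \beta_2^0 > 0$ and suppose $\lambda/\hat\varphi^2 \ge \beta_2^0 + (\beta_1^0 - \beta_2^0)/\hat\varphi^2$. Then $\beta^* = (0,0)$ minimizes $\beta \mapsto \|X(\beta - \beta^0)\|_2^2 + 2\lambda\|\beta\|_1$, so that $\|X(\beta^* - \beta^0)\|_2^2 = \|X\beta^0\|_2^2$. -/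
import Mathlib


open scoped RealInnerProductSpace

lemma norm_sq_comb {n : ℕ} (X1 X2 : EuclideanSpace ℝ (Fin n)) (ρ : ℝ)
    (h1 : ‖X1‖ = 1) (h2 : ‖X2‖ = 1) (hρ : ⟪X1, X2⟫ = -ρ) (a b : ℝ) :
    ‖a • X1 + b • X2‖ ^ 2 = a ^ 2 + b ^ 2 - 2 * ρ * a * b := by
  have := real_inner_self_eq_norm_sq (a • X1 + b • X2)
  rw [real_inner_add_add_self] at this
  simp only [real_inner_smul_left, real_inner_smul_right, hρ,
    real_inner_self_eq_norm_sq, h1, h2] at this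
  have e1 : ‖a • X1‖ = |a| := by rw [norm_smul, h1]; simp
  have e2 : ‖b • X2‖ = |b| := by rw [norm_smul, h2]; simp
  rw [e1, e2, sq_abs, sq_abs] at this
  nlinarith [this]

/-- noiseless Lasso with p = s₀ = 2, Case 3: the Lasso is identically zero. -/
theorem stmt6 (n : ℕ) (X1 X2 : EuclideanSpace ℝ (Fin n)) (ρ lam β10 β20 : ℝ)
    (h1 : ‖X1‖ = 1) (h2 : ‖X2‖ = 1) (hρ : ⟪X1, X2⟫ = -ρ)
    (hρ0 : 0 < ρ) (hρ1 : ρ < 1) (hlam : 0 < lam)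
    (hβ : β10 ≥ β20) (hβ2 : 0 < β20)
    (hcase : lam / (1 - ρ) ≥ β20 + (β10 - β20) / (1 - ρ)) :
    (∀ b1 b2 : ℝ,
      ‖((0 : ℝ) - β10) • X1 + ((0 : ℝ) - β20) • X2‖ ^ 2
          + 2 * lam * (|(0 : ℝ)| + |(0 : ℝ)|)
        ≤ ‖(b1 - β10) • X1 + (b2 - β20) • X2‖ ^ 2 + 2 * lam * (|b1| + |b2|)) ∧
    ‖((0 : ℝ) - β10) • X1 + ((0 : ℝ) - β20) • X2‖ ^ 2 = ‖β10 • X1 + β20 • X2‖ ^ 2 := by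
  have hφ : (0:ℝ) < 1 - ρ := by linarith
  have hc1 : lam ≥ β10 - ρ * β20 := by
    rw [ge_iff_le, le_div_iff₀ hφ] at hcase
    have h := hcase
    rw [add_mul, div_mul_cancel₀ _ hφ.ne'] at h
    nlinarith
  have hc2 : lam ≥ β20 - ρ * β10 := by nlinarith
  constructor
  · intro b1 b2
    rw [norm_sq_comb X1 X2 ρ h1 h2 hρ, norm_sq_comb X1 X2 ρ h1 h2 hρ]
    have hc1' : (0:ℝ) ≤ β10 - ρ * β20 := by nlinarith
    have hc2' : |β20 - ρ * β10| ≤ lam := by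
      rw [abs_le]; constructor <;> nlinarith
    have ha1 : b1 * (β10 - ρ * β20) ≤ |b1| * lam := by
      calc b1 * (β10 - ρ * β20) ≤ |b1| * (β10 - ρ * β20) :=
            mul_le_mul_of_nonneg_right (le_abs_self b1) hc1'
        _ ≤ |b1| * lam := mul_le_mul_of_nonneg_left (by linarith) (abs_nonneg b1)
    have ha2 : b2 * (β20 - ρ * β10) ≤ |b2| * lam := by
      calc b2 * (β20 - ρ * β10) ≤ |b2 * (β20 - ρ * β10)| := le_abs_self _
        _ = |b2| * |β20 - ρ * β10| := abs_mul _ _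
        _ ≤ |b2| * lam := mul_le_mul_of_nonneg_left hc2' (abs_nonneg b2)
    have h3 : 2 * ρ * (b1 * b2) ≤ b1 ^ 2 + b2 ^ 2 := by
      nlinarith [mul_nonneg hφ.le (sq_nonneg (b1 + b2)),
        mul_nonneg (by linarith : (0:ℝ) ≤ 1 + ρ) (sq_nonneg (b1 - b2))]
    simp only [abs_zero]
    nlinarith [ha1, ha2, h3]
  · rw [norm_sq_comb X1 X2 ρ h1 h2 hρ, norm_sq_comb X1 X2 ρ h1 h2 hρ]
    ring
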